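/- Let Z, X ∈ ℝ^{n×τ}, U ∈ ℝ^{m×τ}, and Σ = {(A,B) : Z = A·X + B·U}. Suppose Σ is nonempty and there exists K ∈ ℝ^{m×n} such that A + B·K is the same matrix for all (A,B) ∈ Σ (in particular if A + B·K is stable for all (A,B) ∈ Σ). If X has full row rank, then there exists a right inverse X† of X such that K = U·X† and A + B·K = Z·X† for all (A,B) ∈ Σ. -/

import Mathlib

open Matrix

/-- Factorization of linear maps through another with bigger kernel. -/
theorem exists_factor_of_ker_le_ker {K V W W' : Type*} [Field K] [AddCommGroup V] [Module K V]
    [AddCommGroup W] [Module K W] [AddCommGroup W'] [Module K W']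
    (f : V →ₗ[K] W) (g : V →ₗ[K] W')
    (h : LinearMap.ker f ≤ LinearMap.ker g) :
    ∃ h' : W →ₗ[K] W', g = h'.comp f := by
  obtain ⟨s, hs⟩ := f.rangeRestrict.exists_rightInverse_of_surjective
    (LinearMap.range_eq_top.2 f.surjective_rangeRestrict)
  obtain ⟨h', hh'⟩ := LinearMap.exists_extend (g.comp s)
  refine ⟨h', ?_⟩
  ext x
  have h1 : f.rangeRestrict (s (f.rangeRestrict x)) = f.rangeRestrict x := by
    rw [← LinearMap.comp_apply, hs, LinearMap.id_apply]
  have h2 : f (s (f.rangeRestrict x)) = f x := congrArg Subtype.val h1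
  have h3 : s (f.rangeRestrict x) - x ∈ LinearMap.ker f := by
    simp [LinearMap.mem_ker, map_sub, h2]
  have h4 : g (s (f.rangeRestrict x)) = g x := by
    have := h h3
    rw [LinearMap.mem_ker, map_sub, sub_eq_zero] at this
    exact this
  have h5 : h' (f x) = g (s (f.rangeRestrict x)) :=
    LinearMap.congr_fun hh' (f.rangeRestrict x)
  simp only [LinearMap.comp_apply]
  rw [h5, h4]

theorem mulVecLin_inj' {p q : ℕ} (A B : Matrix (Fin p) (Fin q) ℝ)
    (h : A.mulVecLin = B.mulVecLin) : A = B := by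
  ext i j
  have := congrFun (congrArg DFunLike.coe h) (Pi.single j 1)
  have h2 := congrFun this i
  simpa [Matrix.mulVecLin, Matrix.mulVec_single] using h2

theorem mulVecLin_toMatrix'' {p q : ℕ} (f : (Fin q → ℝ) →ₗ[ℝ] Fin p → ℝ) :
    (LinearMap.toMatrix' f).mulVecLin = f := by
  refine LinearMap.ext fun v => ?_
  rw [Matrix.mulVecLin_apply, ← Matrix.toLin'_apply, Matrix.toLin'_toMatrix']

theorem stmt5 {n m τ : ℕ}
    (Z X : Matrix (Fin n) (Fin τ) ℝ) (U : Matrix (Fin m) (Fin τ) ℝ)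
    (hne : ∃ A : Matrix (Fin n) (Fin n) ℝ, ∃ B : Matrix (Fin n) (Fin m) ℝ,
      Z = A * X + B * U)
    (K : Matrix (Fin m) (Fin n) ℝ)
    (C : Matrix (Fin n) (Fin n) ℝ)
    (hconst : ∀ A : Matrix (Fin n) (Fin n) ℝ, ∀ B : Matrix (Fin n) (Fin m) ℝ,
      Z = A * X + B * U → A + B * K = C)
    (hrank : X.rank = n) :
    ∃ Xd : Matrix (Fin τ) (Fin n) ℝ, X * Xd = 1 ∧ K = U * Xd ∧
      ∀ A : Matrix (Fin n) (Fin n) ℝ, ∀ B : Matrix (Fin n) (Fin m) ℝ,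
        Z = A * X + B * U → A + B * K = Z * Xd := by
  rcases Nat.eq_zero_or_pos n with hn | hn
  · subst hn
    exact ⟨0, Subsingleton.elim _ _, Subsingleton.elim _ _,
      fun A B _ => Subsingleton.elim _ _⟩
  obtain ⟨A₀, B₀, h₀⟩ := hne
  -- construct a right inverse X₀ of X
  have hsurj : LinearMap.range X.mulVecLin = ⊤ := by
    apply Submodule.eq_top_of_finrank_eq
    rw [← Matrix.rank, hrank, Module.finrank_pi]
    simp
  obtain ⟨g, hg⟩ := X.mulVecLin.exists_rightInverse_of_surjective hsurj
  set X₀ : Matrix (Fin τ) (Fin n) ℝ := LinearMap.toMatrix' g with hX₀def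
  have hX₀ : X * X₀ = 1 := by
    apply mulVecLin_inj'
    rw [Matrix.mulVecLin_mul, Matrix.mulVecLin_one, hX₀def, mulVecLin_toMatrix'']
    exact hg
  set Q : Matrix (Fin m) (Fin τ) ℝ := U - U * X₀ * X with hQdef
  set R : Matrix (Fin m) (Fin n) ℝ := K - U * X₀ with hRdef
  -- key consequence of hconst
  have hMQ : ∀ M : Matrix (Fin n) (Fin m) ℝ, M * Q = 0 → M * R = 0 := by
    intro M hM
    rw [hQdef, Matrix.mul_sub, sub_eq_zero] at hM
    -- hM : M * U = M * (U * X₀ * X)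
    have hA₀X : Z - B₀ * U = A₀ * X := by rw [h₀, add_sub_cancel_right]
    have key1 : (A₀ * X) * X₀ * X = A₀ * X := by
      rw [Matrix.mul_assoc A₀ X X₀, hX₀, Matrix.mul_one]
    have hmem1 : Z = (Z - B₀ * U) * X₀ * X + B₀ * U := by
      rw [hA₀X, key1, ← hA₀X, sub_add_cancel]
    have e1 : Z - (B₀ + M) * U = A₀ * X - M * U := by
      rw [h₀, Matrix.add_mul]; abel
    have key2 : M * U * X₀ * X = M * U := by
      rw [Matrix.mul_assoc M U X₀, Matrix.mul_assoc M (U * X₀) X]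
      exact hM.symm
    have e2 : (A₀ * X - M * U) * X₀ * X = A₀ * X - M * U := by
      rw [Matrix.sub_mul, Matrix.sub_mul, key1, key2]
    have hmem2 : Z = (Z - (B₀ + M) * U) * X₀ * X + (B₀ + M) * U := by
      rw [e1, e2, ← e1, sub_add_cancel]
    have hc1 := hconst ((Z - B₀ * U) * X₀) B₀ hmem1
    have hc2 := hconst ((Z - (B₀ + M) * U) * X₀) (B₀ + M) hmem2
    have hdiff : (Z - (B₀ + M) * U) * X₀ + (B₀ + M) * K
        = (Z - B₀ * U) * X₀ + B₀ * K := by rw [hc1, hc2]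
    simp only [Matrix.sub_mul, Matrix.add_mul] at hdiff
    -- hdiff : Z*X₀ - (B₀*U*X₀ + M*U*X₀) + (B₀*K + M*K) = Z*X₀ - B₀*U*X₀ + B₀*K  (roughly)
    rw [hRdef, Matrix.mul_sub, sub_eq_zero, ← Matrix.mul_assoc]
    -- goal : M * K = M * U * X₀
    have h0 : M * K - M * U * X₀ =
        (Z * X₀ - (B₀ * U * X₀ + M * U * X₀) + (B₀ * K + M * K))
          - (Z * X₀ - B₀ * U * X₀ + B₀ * K) := by abel
    have hdiff' : Z * X₀ - (B₀ * U * X₀ + M * U * X₀) + (B₀ * K + M * K)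
        = Z * X₀ - B₀ * U * X₀ + B₀ * K := by
      have := hdiff
      abel_nf at this ⊢
      convert this using 2 <;> abel
    rw [hdiff', sub_self] at h0
    exact sub_eq_zero.1 h0
  -- turn into a kernel inclusion for transposes
  obtain ⟨i0⟩ : Nonempty (Fin n) := ⟨⟨0, hn⟩⟩
  have hker : LinearMap.ker Qᵀ.mulVecLin ≤ LinearMap.ker Rᵀ.mulVecLin := by
    intro v hv
    rw [LinearMap.mem_ker] at hv ⊢
    set M : Matrix (Fin n) (Fin m) ℝ := Matrix.of (fun _ j => v j) with hMdef
    have hMQ0 : M * Q = 0 := by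
      ext i j
      have := congrFun hv j
      simpa [Matrix.mul_apply, Matrix.mulVecLin, Matrix.mulVec, Matrix.vecMul, hMdef, dotProduct,
        Matrix.transpose_apply, mul_comm] using this
    have hMR := hMQ M hMQ0
    ext j
    have := congrFun (congrFun hMR i0) j
    simpa [Matrix.mul_apply, Matrix.mulVecLin, Matrix.mulVec, Matrix.vecMul, hMdef, dotProduct,
      Matrix.transpose_apply, mul_comm] using this
  obtain ⟨h', hh'⟩ := exists_factor_of_ker_le_ker Qᵀ.mulVecLin Rᵀ.mulVecLin hker
  set W : Matrix (Fin τ) (Fin n) ℝ := (LinearMap.toMatrix' h')ᵀ with hWdef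
  have hRQW : R = Q * W := by
    have hT : Rᵀ = (LinearMap.toMatrix' h') * Qᵀ := by
      apply mulVecLin_inj'
      rw [Matrix.mulVecLin_mul, mulVecLin_toMatrix'']
      exact hh'
    have := congrArg Matrix.transpose hT
    rwa [Matrix.transpose_transpose, Matrix.transpose_mul, Matrix.transpose_transpose] at this
  set Xd : Matrix (Fin τ) (Fin n) ℝ := X₀ + W - X₀ * X * W with hXdef
  have hXXd : X * Xd = 1 := by
    rw [hXdef, Matrix.mul_sub, Matrix.mul_add, hX₀, ← Matrix.mul_assoc, ← Matrix.mul_assoc,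
      hX₀, Matrix.one_mul]
    abel
  have hKU : K = U * Xd := by
    have hexp : K - U * X₀ = U * W - U * X₀ * X * W := by
      rw [← hRdef, hRQW, hQdef, Matrix.sub_mul]
    have hK : K = U * W - U * X₀ * X * W + U * X₀ := by
      rw [← hexp, sub_add_cancel]
    rw [hK, hXdef, Matrix.mul_sub, Matrix.mul_add, ← Matrix.mul_assoc, ← Matrix.mul_assoc]
    abel
  refine ⟨Xd, hXXd, hKU, fun A B hZ => ?_⟩
  rw [hZ, Matrix.add_mul, Matrix.mul_assoc, Matrix.mul_assoc, hXXd, Matrix.mul_one, ← hKU]
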